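/- (Value difference forces variation distance) Let P₁ and P₂ be probability measures on Ω = 𝒳^ℕ, let r : 𝒳 → [0,1], let γ ∈ (0,1), and define the discounted values V_i := (1−γ)·∑_{j=0}^{∞} γ^j · E_{P_i}[ r(x_j) ] for i = 1, 2. If |V₁ − V₂| > ε for some ε > 0, then d_k(P₁, P₂) > ε/2, where k = ⌈ log(ε/2) / log γ ⌉. -/

import Mathlib

open MeasureTheory Filter

lemma meas_finset_toReal {α : Type*} [Fintype α] [MeasurableSpace α] [MeasurableSingletonClass α]
    (μ : Measure α) [IsFiniteMeasure μ] (F : Finset α) :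
    (μ ↑F).toReal = ∑ v ∈ F, (μ {v}).toReal := by
  rw [show (↑F : Set α) = ⋃ v ∈ F, ({v} : Set α) from (Set.biUnion_of_singleton (↑F : Set α)).symm,
    measure_biUnion_finset (by simp [Set.PairwiseDisjoint, Set.Pairwise, Function.onFun])
      (fun v _ => measurableSet_singleton v),
    ENNReal.toReal_sum (fun v _ => measure_ne_top μ _)]

lemma diff_le_dk {X : Type*} [Fintype X] [Nonempty X] [MeasurableSpace X]
    [MeasurableSingletonClass X]
    (P₁ P₂ : Measure (ℕ → X)) [IsProbabilityMeasure P₁] [IsProbabilityMeasure P₂]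
    (k : ℕ) (h : (Fin k → X) → ℝ) (hh : ∀ v, h v ∈ Set.Icc (0:ℝ) 1) :
    (∫ y, h (fun j : Fin k => y j) ∂P₁) - (∫ y, h (fun j : Fin k => y j) ∂P₂)
      ≤ (⨆ E : Set (Fin k → X),
    |(P₁ {y | (fun j : Fin k => y j) ∈ E}).toReal - (P₂ {y | (fun j : Fin k => y j) ∈ E}).toReal|) := by
  have hproj : Measurable (fun (y : ℕ → X) (j : Fin k) => y (j : ℕ)) :=
    measurable_pi_lambda _ (fun j => measurable_pi_apply _)
  set μ₁ := P₁.map (fun (y : ℕ → X) (j : Fin k) => y (j : ℕ)) with hμ₁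
  set μ₂ := P₂.map (fun (y : ℕ → X) (j : Fin k) => y (j : ℕ)) with hμ₂
  have i₁ : IsProbabilityMeasure μ₁ := Measure.isProbabilityMeasure_map hproj.aemeasurable
  have i₂ : IsProbabilityMeasure μ₂ := Measure.isProbabilityMeasure_map hproj.aemeasurable
  have hmeas : Measurable h := measurable_of_countable h
  have key : ∀ (P : Measure (ℕ → X)) [IsProbabilityMeasure P],
      ∫ y, h (fun j : Fin k => y (j:ℕ)) ∂P
        = ∑ v, ((P.map (fun (y : ℕ → X) (j : Fin k) => y (j : ℕ))) {v}).toReal • h v := by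
    intro P _
    rw [← integral_map hproj.aemeasurable hmeas.aestronglyMeasurable]
    exact integral_fintype (Integrable.of_finite)
  rw [key P₁, key P₂]
  set p₁ : (Fin k → X) → ℝ := fun v => (μ₁ {v}).toReal
  set p₂ : (Fin k → X) → ℝ := fun v => (μ₂ {v}).toReal
  set F : Finset (Fin k → X) := Finset.univ.filter (fun v => p₂ v ≤ p₁ v) with hF
  have step1 : ∑ v, p₁ v • h v - ∑ v, p₂ v • h v ≤ ∑ v ∈ F, (p₁ v - p₂ v) := by
    rw [← Finset.sum_sub_distrib]
    rw [← Finset.sum_filter_add_sum_filter_not Finset.univ (fun v => p₂ v ≤ p₁ v)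
      (fun v => p₁ v • h v - p₂ v • h v)]
    have h1 : ∑ v ∈ F, (p₁ v • h v - p₂ v • h v) ≤ ∑ v ∈ F, (p₁ v - p₂ v) := by
      apply Finset.sum_le_sum
      intro v hv
      have hv' : p₂ v ≤ p₁ v := (Finset.mem_filter.1 hv).2
      have := (hh v).1; have := (hh v).2
      simp only [smul_eq_mul]
      nlinarith
    have h2 : ∑ v ∈ Finset.univ.filter (fun v => ¬ p₂ v ≤ p₁ v),
        (p₁ v • h v - p₂ v • h v) ≤ 0 := by
      apply Finset.sum_nonpos
      intro v hv
      have hv' : p₁ v < p₂ v := lt_of_not_ge (Finset.mem_filter.1 hv).2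
      have := (hh v).1; have := (hh v).2
      simp only [smul_eq_mul]
      nlinarith
    linarith
  have step2 : ∑ v ∈ F, (p₁ v - p₂ v)
      = (P₁ {y | (fun j : Fin k => y (j:ℕ)) ∈ (↑F : Set (Fin k → X))}).toReal
      - (P₂ {y | (fun j : Fin k => y (j:ℕ)) ∈ (↑F : Set (Fin k → X))}).toReal := by
    have hFm : MeasurableSet (↑F : Set (Fin k → X)) := F.countable_toSet.measurableSet
    have e1 : P₁ {y | (fun j : Fin k => y (j:ℕ)) ∈ (↑F : Set (Fin k → X))} = μ₁ ↑F := by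
      rw [hμ₁, Measure.map_apply hproj hFm]; rfl
    have e2 : P₂ {y | (fun j : Fin k => y (j:ℕ)) ∈ (↑F : Set (Fin k → X))} = μ₂ ↑F := by
      rw [hμ₂, Measure.map_apply hproj hFm]; rfl
    rw [e1, e2, meas_finset_toReal, meas_finset_toReal, Finset.sum_sub_distrib]
  have bdd : BddAbove (Set.range (fun E : Set (Fin k → X) =>
      |(P₁ {y | (fun j : Fin k => y j) ∈ E}).toReal - (P₂ {y | (fun j : Fin k => y j) ∈ E}).toReal|)) :=
    Set.Finite.bddAbove (Set.finite_range _)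
  calc ∑ v, p₁ v • h v - ∑ v, p₂ v • h v ≤ ∑ v ∈ F, (p₁ v - p₂ v) := step1
    _ ≤ |(P₁ {y | (fun j : Fin k => y (j:ℕ)) ∈ (↑F : Set (Fin k → X))}).toReal
      - (P₂ {y | (fun j : Fin k => y (j:ℕ)) ∈ (↑F : Set (Fin k → X))}).toReal| := by
        rw [step2]; exact le_abs_self _
    _ ≤ _ := le_ciSup bdd (↑F : Set (Fin k → X))

/-- The `k`-step variation distance between two measures on `𝒳^ℕ`:
`d_k(P₁, P₂) = max_{ℰ ⊆ 𝒳^k} |P₁[(x_0,…,x_{k−1}) ∈ ℰ] − P₂[(x_0,…,x_{k−1}) ∈ ℰ]|`. -/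
noncomputable def dkStep {X : Type*} [MeasurableSpace X]
    (P₁ P₂ : Measure (ℕ → X)) (k : ℕ) : ℝ :=
  ⨆ E : Set (Fin k → X),
    |(P₁ {y | (fun j : Fin k => y j) ∈ E}).toReal - (P₂ {y | (fun j : Fin k => y j) ∈ E}).toReal|

/-- **Value difference forces variation distance.** Let `P₁, P₂` be probability measures on
`𝒳^ℕ`, `r : 𝒳 → [0,1]` a reward function, `γ ∈ (0,1)` a discount factor, and let
`V_i = (1−γ)·∑_j γ^j·E_{P_i}[r(x_j)]`. If `|V₁ − V₂| > ε > 0`, then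
`d_k(P₁, P₂) > ε/2` for `k = ⌈log(ε/2)/log γ⌉`. -/
theorem value_difference_forces_variation_distance
    {X : Type*} [Fintype X] [Nonempty X] [MeasurableSpace X] [MeasurableSingletonClass X]
    (P₁ P₂ : Measure (ℕ → X)) [IsProbabilityMeasure P₁] [IsProbabilityMeasure P₂]
    (r : X → ℝ) (hr : ∀ a, r a ∈ Set.Icc (0:ℝ) 1)
    (γ : ℝ) (hγ : γ ∈ Set.Ioo (0:ℝ) 1)
    (ε : ℝ) (hε : 0 < ε)
    (hdiff : ε < |((1 - γ) * ∑' j : ℕ, γ ^ j * ∫ y, r (y j) ∂P₁)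
                  - ((1 - γ) * ∑' j : ℕ, γ ^ j * ∫ y, r (y j) ∂P₂)|) :
    ε / 2 < dkStep P₁ P₂ ⌈Real.log (ε / 2) / Real.log γ⌉₊ := by
  obtain ⟨hγ0, hγ1⟩ := hγ
  have h1γ : 0 < 1 - γ := by linarith
  set k : ℕ := ⌈Real.log (ε / 2) / Real.log γ⌉₊ with hk
  set D : ℝ := dkStep P₁ P₂ k with hD
  -- integrability and bounds of expectations
  have hint : ∀ (P : Measure (ℕ → X)) [IsProbabilityMeasure P] (j : ℕ),
      Integrable (fun y => r (y j)) P := by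
    intro P _ j
    have hm : Measurable fun y : ℕ → X => r (y j) :=
      (measurable_of_countable r).comp (measurable_pi_apply j)
    refine (integrable_const (1:ℝ)).mono' hm.aestronglyMeasurable (ae_of_all _ fun y => ?_)
    rw [Real.norm_eq_abs]
    exact abs_le.2 ⟨by linarith [(hr (y j)).1], (hr (y j)).2⟩
  have he0 : ∀ (P : Measure (ℕ → X)) [IsProbabilityMeasure P] (j : ℕ),
      0 ≤ ∫ y, r (y j) ∂P := fun P _ j => integral_nonneg fun y => (hr _).1
  have he1 : ∀ (P : Measure (ℕ → X)) [IsProbabilityMeasure P] (j : ℕ),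
      ∫ y, r (y j) ∂P ≤ 1 := by
    intro P _ j
    calc ∫ y, r (y j) ∂P ≤ ∫ _, (1:ℝ) ∂P :=
          integral_mono (hint P j) (integrable_const 1) fun y => (hr _).2
      _ = 1 := by simp
  -- summability
  have hsum : ∀ (P : Measure (ℕ → X)) [IsProbabilityMeasure P],
      Summable (fun j : ℕ => γ ^ j * ∫ y, r (y j) ∂P) := by
    intro P _
    refine Summable.of_nonneg_of_le
      (fun j => mul_nonneg (pow_nonneg hγ0.le _) (he0 P j))
      (fun j => ?_) (summable_geometric_of_lt_one hγ0.le hγ1)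
    exact mul_le_of_le_one_right (pow_nonneg hγ0.le _) (he1 P j)
  -- split head and tail
  have hsplit : ∀ (P : Measure (ℕ → X)) [IsProbabilityMeasure P],
      ∑' j : ℕ, γ ^ j * ∫ y, r (y j) ∂P
        = (∑ j ∈ Finset.range k, γ ^ j * ∫ y, r (y j) ∂P)
          + ∑' j : ℕ, γ ^ (j + k) * ∫ y, r (y (j + k)) ∂P := by
    intro P _
    exact ((hsum P).sum_add_tsum_nat_add k).symm
  -- tail bounds
  have hgsum : Summable (fun j : ℕ => γ ^ (j + k)) := by
    simpa [pow_add] using (summable_geometric_of_lt_one hγ0.le hγ1).mul_right (γ ^ k)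
  have htail : ∀ (P : Measure (ℕ → X)) [IsProbabilityMeasure P],
      0 ≤ ∑' j : ℕ, γ ^ (j + k) * ∫ y, r (y (j + k)) ∂P
      ∧ (1 - γ) * ∑' j : ℕ, γ ^ (j + k) * ∫ y, r (y (j + k)) ∂P ≤ γ ^ k := by
    intro P _
    constructor
    · exact tsum_nonneg fun j => mul_nonneg (pow_nonneg hγ0.le _) (he0 P _)
    · have h1 : ∑' j : ℕ, γ ^ (j + k) * ∫ y, r (y (j + k)) ∂P ≤ ∑' j : ℕ, γ ^ (j + k) := by
        refine ((summable_nat_add_iff k).2 (hsum P)).tsum_le_tsum (fun j => ?_) hgsum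
        exact mul_le_of_le_one_right (pow_nonneg hγ0.le _) (he1 P _)
      have h2 : ∑' j : ℕ, γ ^ (j + k) = γ ^ k / (1 - γ) := by
        simp only [pow_add]
        rw [tsum_mul_right, tsum_geometric_of_lt_one hγ0.le hγ1]
        field_simp
      have := mul_le_mul_of_nonneg_left h1 h1γ.le
      rw [h2] at this
      calc (1 - γ) * ∑' j : ℕ, γ ^ (j + k) * ∫ y, r (y (j + k)) ∂P
          ≤ (1 - γ) * (γ ^ k / (1 - γ)) := this
        _ = γ ^ k := by field_simp
  -- γ^k ≤ ε/2
  have hpow : γ ^ k ≤ ε / 2 := by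
    by_cases hc : 1 ≤ ε / 2
    · exact le_trans (pow_le_one₀ hγ0.le hγ1.le) hc
    · push_neg at hc
      have hε2 : 0 < ε / 2 := by linarith
      have hlogγ : Real.log γ < 0 := Real.log_neg hγ0 hγ1
      have hkc : Real.log (ε / 2) / Real.log γ ≤ (k : ℝ) := Nat.le_ceil _
      have hmul : (k : ℝ) * Real.log γ ≤ Real.log (ε / 2) := by
        rw [div_le_iff_of_neg hlogγ] at hkc
        linarith
      calc γ ^ k = Real.exp (Real.log (γ ^ k)) := (Real.exp_log (pow_pos hγ0 k)).symm
        _ = Real.exp ((k : ℝ) * Real.log γ) := by rw [Real.log_pow]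
        _ ≤ Real.exp (Real.log (ε / 2)) := Real.exp_le_exp.2 hmul
        _ = ε / 2 := Real.exp_log hε2
  -- D ≥ 0 and per-term bound
  have bdd : BddAbove (Set.range (fun E : Set (Fin k → X) =>
      |(P₁ {y | (fun j : Fin k => y j) ∈ E}).toReal
        - (P₂ {y | (fun j : Fin k => y j) ∈ E}).toReal|)) :=
    Set.Finite.bddAbove (Set.finite_range _)
  have hD0 : 0 ≤ D := le_trans (abs_nonneg _) (le_ciSup bdd (∅ : Set (Fin k → X)))
  have hsymm : dkStep P₂ P₁ k = D := by
    rw [hD, dkStep, dkStep]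
    congr 1
    funext E
    rw [abs_sub_comm]
  have hterm : ∀ j < k, |(∫ y, r (y j) ∂P₁) - ∫ y, r (y j) ∂P₂| ≤ D := by
    intro j hj
    have h1 := diff_le_dk P₁ P₂ k (fun v => r (v ⟨j, hj⟩)) (fun v => hr _)
    have h2 := diff_le_dk P₂ P₁ k (fun v => r (v ⟨j, hj⟩)) (fun v => hr _)
    rw [show (dkStep P₁ P₂ k : ℝ) = D from rfl] at *
    refine abs_sub_le_iff.2 ⟨?_, ?_⟩
    · exact h1
    · calc (∫ y, r (y j) ∂P₂) - ∫ y, r (y j) ∂P₁ ≤ dkStep P₂ P₁ k := h2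
        _ = D := hsymm
  -- head bound
  have hhead : |(∑ j ∈ Finset.range k, γ ^ j * ∫ y, r (y j) ∂P₁)
      - ∑ j ∈ Finset.range k, γ ^ j * ∫ y, r (y j) ∂P₂|
      ≤ (∑ j ∈ Finset.range k, γ ^ j) * D := by
    rw [← Finset.sum_sub_distrib, Finset.sum_mul]
    refine le_trans (Finset.abs_sum_le_sum_abs _ _) (Finset.sum_le_sum fun j hj => ?_)
    rw [← mul_sub, abs_mul, abs_of_nonneg (pow_nonneg hγ0.le j)]
    exact mul_le_mul_of_nonneg_left (hterm j (Finset.mem_range.1 hj)) (pow_nonneg hγ0.le j)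
  have hgeo : (∑ j ∈ Finset.range k, γ ^ j) ≤ 1 / (1 - γ) := by
    have := (summable_geometric_of_lt_one hγ0.le hγ1).sum_le_tsum (Finset.range k) (fun j _ => pow_nonneg hγ0.le j)
    rw [one_div]
    rwa [tsum_geometric_of_lt_one hγ0.le hγ1] at this
  have hheadD : (1 - γ) * |(∑ j ∈ Finset.range k, γ ^ j * ∫ y, r (y j) ∂P₁)
      - ∑ j ∈ Finset.range k, γ ^ j * ∫ y, r (y j) ∂P₂| ≤ D := by
    calc (1 - γ) * |(∑ j ∈ Finset.range k, γ ^ j * ∫ y, r (y j) ∂P₁)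
          - ∑ j ∈ Finset.range k, γ ^ j * ∫ y, r (y j) ∂P₂|
        ≤ (1 - γ) * ((∑ j ∈ Finset.range k, γ ^ j) * D) :=
          mul_le_mul_of_nonneg_left hhead h1γ.le
      _ ≤ (1 - γ) * ((1 / (1 - γ)) * D) := by
          apply mul_le_mul_of_nonneg_left _ h1γ.le
          exact mul_le_mul_of_nonneg_right hgeo hD0
      _ = D := by field_simp
  -- final assembly
  rw [hsplit P₁, hsplit P₂] at hdiff
  obtain ⟨ht10, ht1⟩ := htail P₁
  obtain ⟨ht20, ht2⟩ := htail P₂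
  set H₁ := ∑ j ∈ Finset.range k, γ ^ j * ∫ y, r (y j) ∂P₁
  set H₂ := ∑ j ∈ Finset.range k, γ ^ j * ∫ y, r (y j) ∂P₂
  set T₁ := ∑' j : ℕ, γ ^ (j + k) * ∫ y, r (y (j + k)) ∂P₁
  set T₂ := ∑' j : ℕ, γ ^ (j + k) * ∫ y, r (y (j + k)) ∂P₂
  have habs : |(1 - γ) * (H₁ + T₁) - (1 - γ) * (H₂ + T₂)|
      ≤ (1 - γ) * |H₁ - H₂| + γ ^ k := by
    have : (1 - γ) * (H₁ + T₁) - (1 - γ) * (H₂ + T₂)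
        = (1 - γ) * (H₁ - H₂) + ((1 - γ) * T₁ - (1 - γ) * T₂) := by ring
    rw [this]
    refine le_trans (abs_add_le _ _) ?_
    have e1 : |(1 - γ) * (H₁ - H₂)| = (1 - γ) * |H₁ - H₂| := by
      rw [abs_mul, abs_of_nonneg h1γ.le]
    have e2 : |(1 - γ) * T₁ - (1 - γ) * T₂| ≤ γ ^ k := by
      refine abs_sub_le_iff.2 ⟨?_, ?_⟩ <;> nlinarith [mul_nonneg h1γ.le ht10, mul_nonneg h1γ.le ht20]
    linarith
  have := lt_of_lt_of_le hdiff habs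
  linarith
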